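/- arXiv:1004.1821 — 2 statements merged into one kernel-verified Lean document; each statement's English description precedes it below -/
import Mathlib

section
/- Let A be an n×N real matrix, I ⊆ {1,…,N} an index set, and L ≥ 0, U ≥ 0 such that (1−L)‖x‖₂² ≤ ‖Ax‖₂² ≤ (1+U)‖x‖₂² for every x ∈ ℝ^N supported in I. Then for every u ∈ ℝ^N supported in I, (1−L)‖u‖₂ ≤ ‖(A*(Au))_I‖₂ ≤ (1+U)‖u‖₂. -/
open Finset Matrix

noncomputable def euclNorm {α : Type*} [Fintype α] (v : α → ℝ) : ℝ :=
  Real.sqrt (∑ i, (v i) ^ 2)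

def restr {N : ℕ} (I : Finset (Fin N)) (x : Fin N → ℝ) : Fin N → ℝ :=
  fun i => if i ∈ I then x i else 0

def sparse {N : ℕ} (k : ℕ) (x : Fin N → ℝ) : Prop :=
  (Finset.univ.filter fun i => x i ≠ 0).card ≤ k

def aRIP {n N : ℕ} (A : Matrix (Fin n) (Fin N) ℝ) (m : ℕ) (L U : ℝ) : Prop :=
  ∀ x : Fin N → ℝ, sparse m x →
    (1 - L) * euclNorm x ^ 2 ≤ euclNorm (A.mulVec x) ^ 2 ∧
      euclNorm (A.mulVec x) ^ 2 ≤ (1 + U) * euclNorm x ^ 2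

def selects {N : ℕ} (T : Finset (Fin N)) (v : Fin N → ℝ) : Prop :=
  ∀ i ∈ T, ∀ j ∉ T, |v j| ≤ |v i|

def subCols {n N : ℕ} (A : Matrix (Fin n) (Fin N) ℝ) (I : Finset (Fin N)) :
    Matrix (Fin n) I ℝ :=
  fun r c => A r (c : Fin N)

noncomputable def gram {n N : ℕ} (A : Matrix (Fin n) (Fin N) ℝ) (I : Finset (Fin N)) :
    Matrix I I ℝ :=
  (subCols A I)ᵀ * subCols A I

noncomputable def pinvApply {n N : ℕ} (A : Matrix (Fin n) (Fin N) ℝ) (I : Finset (Fin N))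
    (y : Fin n → ℝ) : I → ℝ :=
  ((gram A I)⁻¹ * (subCols A I)ᵀ).mulVec y

noncomputable def pinvVec {n N : ℕ} (A : Matrix (Fin n) (Fin N) ℝ) (I : Finset (Fin N))
    (y : Fin n → ℝ) : Fin N → ℝ :=
  fun i => if h : i ∈ I then pinvApply A I y ⟨i, h⟩ else 0

lemma euclNorm_nonneg' {α : Type*} [Fintype α] (v : α → ℝ) : 0 ≤ euclNorm v :=
  Real.sqrt_nonneg _

lemma euclNorm_sq {α : Type*} [Fintype α] (v : α → ℝ) : euclNorm v ^ 2 = ∑ i, (v i) ^ 2 :=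
  Real.sq_sqrt (Finset.sum_nonneg fun _ _ => sq_nonneg _)

lemma cauchy {α : Type*} [Fintype α] (v w : α → ℝ) :
    ∑ i, v i * w i ≤ euclNorm v * euclNorm w :=
  Real.sum_mul_le_sqrt_mul_sqrt _ _ _

-- dot product transfer : v ⬝ᵥ (Aᵀ *ᵥ w) = (A *ᵥ v) ⬝ᵥ w
lemma dot_transpose {n N : ℕ} (A : Matrix (Fin n) (Fin N) ℝ) (v : Fin N → ℝ) (w : Fin n → ℝ) :
    ∑ i, v i * (Aᵀ.mulVec w) i = ∑ j, (A.mulVec v) j * w j := by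
  have h : v ⬝ᵥ (Aᵀ *ᵥ w) = (A *ᵥ v) ⬝ᵥ w := by
    rw [Matrix.dotProduct_mulVec, Matrix.vecMul_transpose]
  simpa [dotProduct] using h

theorem stmt1 {n N : ℕ} (A : Matrix (Fin n) (Fin N) ℝ) (I : Finset (Fin N))
    (L U : ℝ) (hL : 0 ≤ L) (hU : 0 ≤ U)
    (hA : ∀ x : Fin N → ℝ, (∀ i ∉ I, x i = 0) →
      (1 - L) * euclNorm x ^ 2 ≤ euclNorm (A.mulVec x) ^ 2 ∧
        euclNorm (A.mulVec x) ^ 2 ≤ (1 + U) * euclNorm x ^ 2) :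
    ∀ u : Fin N → ℝ, (∀ i ∉ I, u i = 0) →
      (1 - L) * euclNorm u ≤ euclNorm (restr I (Aᵀ.mulVec (A.mulVec u))) ∧
        euclNorm (restr I (Aᵀ.mulVec (A.mulVec u))) ≤ (1 + U) * euclNorm u := by
  intro u hu
  set w : Fin N → ℝ := Aᵀ.mulVec (A.mulVec u) with hw
  set v : Fin N → ℝ := restr I w with hv
  have hvs : ∀ i ∉ I, v i = 0 := by
    intro i hi; simp [hv, restr, hi]
  -- ∑ v i ^ 2 = ∑ v i * w i
  have hvw : euclNorm v ^ 2 = ∑ i, v i * w i := by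
    rw [euclNorm_sq]
    refine Finset.sum_congr rfl fun i _ => ?_
    by_cases hi : i ∈ I <;> simp [hv, restr, hi, sq]
  have hvAA : euclNorm v ^ 2 = ∑ j, (A.mulVec v) j * (A.mulVec u) j := by
    rw [hvw, hw]; exact dot_transpose A v (A.mulVec u)
  -- ∑ u i * v i = ∑ u i * w i = ‖Au‖²
  have huv : ∑ i, u i * v i = euclNorm (A.mulVec u) ^ 2 := by
    have h1 : ∑ i, u i * v i = ∑ i, u i * w i := by
      refine Finset.sum_congr rfl fun i _ => ?_
      by_cases hi : i ∈ I <;> simp [hv, restr, hi, hu i]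
    rw [h1, hw, dot_transpose A u (A.mulVec u), euclNorm_sq]
    exact Finset.sum_congr rfl fun j _ => (sq (A.mulVec u j)).symm
  have hAu := hA u hu
  have hAv := hA v hvs
  have eu0 : 0 ≤ euclNorm u := euclNorm_nonneg' u
  have ev0 : 0 ≤ euclNorm v := euclNorm_nonneg' v
  constructor
  · -- lower bound
    have hCS : ∑ i, u i * v i ≤ euclNorm u * euclNorm v := cauchy u v
    have key : (1 - L) * euclNorm u ^ 2 ≤ euclNorm u * euclNorm v := by
      calc (1 - L) * euclNorm u ^ 2 ≤ euclNorm (A.mulVec u) ^ 2 := hAu.1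
        _ = ∑ i, u i * v i := huv.symm
        _ ≤ euclNorm u * euclNorm v := hCS
    rcases eq_or_lt_of_le eu0 with h | h
    · simp [← h]; exact ev0
    · nlinarith [h]
  · -- upper bound
    have hCS : euclNorm v ^ 2 ≤ euclNorm (A.mulVec v) * euclNorm (A.mulVec u) := by
      rw [hvAA]; exact cauchy _ _
    have hU1 : 0 ≤ 1 + U := by linarith
    have hAv' : euclNorm (A.mulVec v) ≤ Real.sqrt (1 + U) * euclNorm v := by
      have := hAv.2
      have h1 : euclNorm (A.mulVec v) = Real.sqrt (euclNorm (A.mulVec v) ^ 2) :=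
        (Real.sqrt_sq (euclNorm_nonneg' _)).symm
      rw [h1]
      calc Real.sqrt (euclNorm (A.mulVec v) ^ 2) ≤ Real.sqrt ((1 + U) * euclNorm v ^ 2) :=
            Real.sqrt_le_sqrt this
        _ = Real.sqrt (1 + U) * euclNorm v := by
            rw [Real.sqrt_mul hU1, Real.sqrt_sq ev0]
    have hAu' : euclNorm (A.mulVec u) ≤ Real.sqrt (1 + U) * euclNorm u := by
      have := hAu.2
      have h1 : euclNorm (A.mulVec u) = Real.sqrt (euclNorm (A.mulVec u) ^ 2) :=
        (Real.sqrt_sq (euclNorm_nonneg' _)).symm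
      rw [h1]
      calc Real.sqrt (euclNorm (A.mulVec u) ^ 2) ≤ Real.sqrt ((1 + U) * euclNorm u ^ 2) :=
            Real.sqrt_le_sqrt this
        _ = Real.sqrt (1 + U) * euclNorm u := by
            rw [Real.sqrt_mul hU1, Real.sqrt_sq eu0]
    have hs : Real.sqrt (1 + U) * Real.sqrt (1 + U) = 1 + U :=
      Real.mul_self_sqrt hU1
    have hAvn : 0 ≤ euclNorm (A.mulVec v) := euclNorm_nonneg' _
    have hAun : 0 ≤ euclNorm (A.mulVec u) := euclNorm_nonneg' _
    have key : euclNorm v ^ 2 ≤ (1 + U) * (euclNorm v * euclNorm u) := by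
      calc euclNorm v ^ 2 ≤ euclNorm (A.mulVec v) * euclNorm (A.mulVec u) := hCS
        _ ≤ (Real.sqrt (1 + U) * euclNorm v) * (Real.sqrt (1 + U) * euclNorm u) := by
            apply mul_le_mul hAv' hAu' hAun
            positivity
        _ = (Real.sqrt (1 + U) * Real.sqrt (1 + U)) * (euclNorm v * euclNorm u) := by ring
        _ = (1 + U) * (euclNorm v * euclNorm u) := by rw [hs]
      
    rcases eq_or_lt_of_le ev0 with h | h
    · rw [← h]; positivity
    · nlinarith [h]
end

section
/- Let A be an n×N real matrix, I ⊆ {1,…,N} an index set, and L ∈ [0,1) such that (1−L)‖x‖₂² ≤ ‖Ax‖₂² for every x ∈ ℝ^N supported in I. Then the matrix A_I*A_I is invertible and for every y ∈ ℝⁿ one has ‖A_I† y‖₂ ≤ (1−L)^{−1/2}·‖y‖₂, where A_I† := (A_I*A_I)⁻¹A_I*. -/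
open Finset Matrix

lemma enorm_sq' {α : Type*} [Fintype α] (v : α → ℝ) : euclNorm v ^ 2 = v ⬝ᵥ v := by
  rw [euclNorm, Real.sq_sqrt (by positivity)]
  simp [dotProduct, sq]

theorem stmt2 {n N : ℕ} (A : Matrix (Fin n) (Fin N) ℝ) (I : Finset (Fin N))
    (L : ℝ) (hL0 : 0 ≤ L) (hL1 : L < 1)
    (hA : ∀ x : Fin N → ℝ, (∀ i ∉ I, x i = 0) →
      (1 - L) * euclNorm x ^ 2 ≤ euclNorm (A.mulVec x) ^ 2) :
    IsUnit (gram A I) ∧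
      ∀ y : Fin n → ℝ, euclNorm (pinvApply A I y) ≤ (Real.sqrt (1 - L))⁻¹ * euclNorm y := by
  classical
  have h1L : (0:ℝ) < 1 - L := by linarith
  set B := subCols A I with hB
  have key : ∀ z : I → ℝ,
      (1 - L) * (z ⬝ᵥ z) ≤ (B.mulVec z) ⬝ᵥ (B.mulVec z) := by
    intro z
    set x : Fin N → ℝ := fun i => if h : i ∈ I then z ⟨i, h⟩ else 0 with hx
    have hsupp : ∀ i ∉ I, x i = 0 := by intro i hi; simp [hx, hi]
    have h1 : euclNorm x ^ 2 = z ⬝ᵥ z := by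
      rw [enorm_sq', dotProduct, dotProduct,
        ← Finset.sum_subset (Finset.subset_univ I)
          (fun i _ hi => by simp [hx, hi]),
        ← Finset.sum_coe_sort I (fun i => x i * x i)]
      exact Finset.sum_congr rfl fun i _ => by simp [hx, i.2]
    have hAx : A.mulVec x = B.mulVec z := by
      funext r
      rw [mulVec, mulVec, dotProduct, dotProduct,
        ← Finset.sum_subset (Finset.subset_univ I)
          (fun i _ hi => by simp [hx, hi]),
        ← Finset.sum_coe_sort I (fun i => A r i * x i)]
      exact Finset.sum_congr rfl fun i _ => by simp [hx, hB, subCols, i.2]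
    have := hA x hsupp
    rwa [h1, hAx, enorm_sq'] at this
  have dotG : ∀ z : I → ℝ, z ⬝ᵥ (gram A I).mulVec z = (B.mulVec z) ⬝ᵥ (B.mulVec z) := by
    intro z
    rw [_root_.gram, ← hB, ← Matrix.mulVec_mulVec, Matrix.dotProduct_mulVec,
      Matrix.vecMul_transpose]
  have hPD : (gram A I).PosDef := by
    refine Matrix.posDef_iff_dotProduct_mulVec.mpr ⟨Matrix.isHermitian_conjTranspose_mul_self _, fun z hz => ?_⟩
    have hz2 : 0 < z ⬝ᵥ z := by
      rcases Function.ne_iff.mp hz with ⟨i, hi⟩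
      have : 0 < z i * z i := by
        rcases lt_or_gt_of_ne hi with h | h
        · exact mul_pos_of_neg_of_neg h h
        · exact mul_pos h h
      have hnn : ∀ j ∈ Finset.univ, j ≠ i → (0:ℝ) ≤ z j * z j := fun j _ _ => mul_self_nonneg _
      calc (0:ℝ) < z i * z i := this
        _ ≤ ∑ j, z j * z j := Finset.single_le_sum (f := fun j => z j * z j)
            (fun j _ => mul_self_nonneg _) (Finset.mem_univ i)
        _ = z ⬝ᵥ z := rfl
    have : (0:ℝ) < (1 - L) * (z ⬝ᵥ z) := mul_pos h1L hz2
    have h2 := key z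
    have hstar : star z = z := by simp
    rw [hstar]
    show 0 < z ⬝ᵥ (gram A I).mulVec z
    rw [dotG z]
    linarith
  refine ⟨hPD.isUnit, fun y => ?_⟩
  set c := pinvApply A I y with hc
  have hGc : (gram A I).mulVec c = Bᵀ.mulVec y := by
    rw [hc, pinvApply, ← hB, Matrix.mulVec_mulVec, ← Matrix.mul_assoc,
      Matrix.mul_nonsing_inv _ (Matrix.isUnit_iff_isUnit_det _ |>.mp hPD.isUnit),
      Matrix.one_mul]
  have ht : (B.mulVec c) ⬝ᵥ (B.mulVec c) = (B.mulVec c) ⬝ᵥ y := by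
    rw [← dotG c, hGc, Matrix.dotProduct_mulVec, Matrix.vecMul_transpose]
  set t := (B.mulVec c) ⬝ᵥ (B.mulVec c) with htdef
  have ht0 : 0 ≤ t := by
    apply Finset.sum_nonneg; intro i _; exact mul_self_nonneg _
  have hSy0 : 0 ≤ y ⬝ᵥ y := by
    apply Finset.sum_nonneg; intro i _; exact mul_self_nonneg _
  have hCS : ((B.mulVec c) ⬝ᵥ y) ^ 2 ≤ t * (y ⬝ᵥ y) := by
    have := Finset.sum_mul_sq_le_sq_mul_sq Finset.univ (B.mulVec c) y
    calc ((B.mulVec c) ⬝ᵥ y) ^ 2 = (∑ i, B.mulVec c i * y i) ^ 2 := rfl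
      _ ≤ (∑ i, B.mulVec c i ^ 2) * ∑ i, y i ^ 2 := this
      _ = t * (y ⬝ᵥ y) := by simp [htdef, dotProduct, sq]
  have htSy : t ≤ y ⬝ᵥ y := by
    have h2 : t ^ 2 ≤ t * (y ⬝ᵥ y) := by
      calc t ^ 2 = (B.mulVec c ⬝ᵥ y) ^ 2 := by rw [ht]
        _ ≤ t * (y ⬝ᵥ y) := hCS
    rcases eq_or_lt_of_le ht0 with h | h
    · linarith
    · nlinarith
  have hmain : (1 - L) * (c ⬝ᵥ c) ≤ y ⬝ᵥ y := le_trans (le_trans (key c) le_rfl) htSy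
  have hc0 : 0 ≤ c ⬝ᵥ c := by
    apply Finset.sum_nonneg; intro i _; exact mul_self_nonneg _
  have hcle : c ⬝ᵥ c ≤ (y ⬝ᵥ y) * (1 - L)⁻¹ := by
    calc c ⬝ᵥ c = (1 - L) * (c ⬝ᵥ c) * (1 - L)⁻¹ := by field_simp
      _ ≤ (y ⬝ᵥ y) * (1 - L)⁻¹ :=
        mul_le_mul_of_nonneg_right hmain (by positivity)
  have hec : euclNorm c = Real.sqrt (c ⬝ᵥ c) := by simp [euclNorm, dotProduct, sq]
  have hey : euclNorm y = Real.sqrt (y ⬝ᵥ y) := by simp [euclNorm, dotProduct, sq]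
  rw [hec, hey]
  calc Real.sqrt (c ⬝ᵥ c) ≤ Real.sqrt ((y ⬝ᵥ y) * (1 - L)⁻¹) := Real.sqrt_le_sqrt hcle
    _ = Real.sqrt (y ⬝ᵥ y) * Real.sqrt (1 - L)⁻¹ := Real.sqrt_mul hSy0 _
    _ = (Real.sqrt (1 - L))⁻¹ * Real.sqrt (y ⬝ᵥ y) := by rw [Real.sqrt_inv, mul_comm]
end
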